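/- Let p be a prime and N ≥ 1 an integer, and let T : ℤ_p → ℤ_p be the p-adic odometer T(x) = x + 1 on the ring of p-adic integers. For every function g : ℤ/p^Nℤ → ℝ there exist a constant c ∈ ℝ and a bounded function h : ℤ_p → ℝ such that for every x ∈ ℤ_p one has g(x mod p^N) = c + h(x+1) − h(x). -/

import Mathlib

/-- For the `p`-adic odometer `x ↦ x + 1` on `ℤ_p`, every cylindric function of
rank `N` (i.e. a function factoring through `ℤ_p → ℤ/p^Nℤ`) is cohomologous to
a constant, with a bounded transfer function. -/
theorem odometer_cylindric_cohomologous_to_constant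
    (p : ℕ) [Fact p.Prime] (N : ℕ) (hN : 1 ≤ N)
    (g : ZMod (p ^ N) → ℝ) :
    ∃ (c : ℝ) (h : ℤ_[p] → ℝ), (∃ M : ℝ, ∀ x : ℤ_[p], |h x| ≤ M) ∧
      ∀ x : ℤ_[p], g (PadicInt.toZModPow N x) = c + h (x + 1) - h x := by
  have hp : 2 ≤ p := (Fact.out : p.Prime).two_le
  have hn2 : 2 ≤ p ^ N := le_trans hp (Nat.le_self_pow (Nat.one_le_iff_ne_zero.mp hN) p)
  have hn0 : 0 < p ^ N := lt_of_lt_of_le (by norm_num) hn2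
  haveI : NeZero (p ^ N) := ⟨hn0.ne'⟩
  set c : ℝ := (∑ y : ZMod (p ^ N), g y) / (p ^ N : ℕ) with hc
  set H : ZMod (p ^ N) → ℝ := fun k => ∑ j ∈ Finset.range k.val, (g j - c) with hH
  -- total sum of (g j - c) over a full period is 0
  have hsum_univ : ∑ j ∈ Finset.range (p ^ N), (g (j : ZMod (p ^ N)) - c) = 0 := by
    have hbij : ∑ j ∈ Finset.range (p ^ N), g (j : ZMod (p ^ N)) = ∑ y : ZMod (p ^ N), g y := by
      refine Finset.sum_bij' (fun j _ => ((j : ZMod (p ^ N)))) (fun k _ => k.val) ?_ ?_ ?_ ?_ ?_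
      · intro a _; exact Finset.mem_univ _
      · intro a _; exact Finset.mem_range.mpr (ZMod.val_lt a)
      · intro a ha; exact ZMod.val_cast_of_lt (Finset.mem_range.mp ha)
      · intro a _; simp [ZMod.natCast_val, ZMod.cast_id]
      · intro a _; rfl
    rw [Finset.sum_sub_distrib, hbij, Finset.sum_const, Finset.card_range, hc]
    have : ((p ^ N : ℕ) : ℝ) ≠ 0 := Nat.cast_ne_zero.mpr hn0.ne'
    rw [nsmul_eq_mul]
    field_simp
    simp
  -- key coboundary identity on ZMod (p ^ N)
  have key : ∀ k : ZMod (p ^ N), H (k + 1) - H k = g k - c := by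
    intro k
    have hval : (k + 1).val = (k.val + 1) % p ^ N := by
      rw [ZMod.val_add, ZMod.val_one_eq_one_mod]
      rw [Nat.mod_eq_of_lt (lt_of_lt_of_le Nat.one_lt_two hn2)]
    have hk : ((k.val : ZMod (p ^ N))) = k := by simp [ZMod.natCast_val, ZMod.cast_id]
    by_cases hcase : k.val + 1 = p ^ N
    · have h0 : (k + 1).val = 0 := by rw [hval, hcase, Nat.mod_self]
      have : H (k + 1) = 0 := by rw [hH]; simp [h0]
      rw [this, hH]
      have : k.val = p ^ N - 1 := by omega
      have hsplit : ∑ j ∈ Finset.range (p ^ N), (g (j : ZMod (p ^ N)) - c)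
          = (∑ j ∈ Finset.range k.val, (g (j : ZMod (p ^ N)) - c)) + (g (k.val : ZMod (p ^ N)) - c) := by
        rw [← Finset.sum_range_succ, hcase]
      rw [hsplit, hk] at hsum_univ
      linarith
    · have hlt : k.val + 1 < p ^ N := lt_of_le_of_ne (ZMod.val_lt k) hcase
      have h0 : (k + 1).val = k.val + 1 := by rw [hval, Nat.mod_eq_of_lt hlt]
      rw [hH]
      simp only [h0, Finset.sum_range_succ, hk]
      ring
  -- transfer function on ℤ_p
  refine ⟨c, fun x => H (PadicInt.toZModPow N x), ⟨∑ y : ZMod (p ^ N), |H y|, ?_⟩, ?_⟩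
  · intro x
    exact Finset.single_le_sum (f := fun y => |H y|) (fun y _ => abs_nonneg _)
      (Finset.mem_univ _)
  · intro x
    have hmap : (PadicInt.toZModPow N) (x + 1) = (PadicInt.toZModPow N) x + 1 := by
      rw [map_add, map_one]
    simp only [hmap]
    have hkey := key ((PadicInt.toZModPow N) x)
    show g ((PadicInt.toZModPow N) x) = c + H ((PadicInt.toZModPow N) x + 1) - H ((PadicInt.toZModPow N) x)
    linarith
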